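/- Let N ≥ 1, let L be an affine subspace of dimension m of the space of real symmetric N×N matrices, and let S = L ∩ { positive semidefinite matrices }. Then every extreme point θ of S satisfies m + r(r+1)/2 ≤ N(N+1)/2, where r = rank θ. -/

import Mathlib

open Matrix

namespace PatakiAux

variable {n : Type*} [Fintype n] [DecidableEq n]

lemma isHermitian_of_isSymm {A : Matrix n n ℝ} (h : A.IsSymm) : A.IsHermitian := by
  unfold Matrix.IsHermitian
  rw [conjTranspose_eq_transpose_of_trivial]
  exact h

/-- The submodule of symmetric matrices. -/
def symmSub (n : Type*) [Fintype n] [DecidableEq n] : Submodule ℝ (Matrix n n ℝ) where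
  carrier := {A | A.IsSymm}
  add_mem' := fun ha hb => ha.add hb
  zero_mem' := isSymm_zero
  smul_mem' := fun c _ hA => hA.smul c

@[simp] lemma mem_symmSub {A : Matrix n n ℝ} : A ∈ symmSub n ↔ A.IsSymm := Iff.rfl

noncomputable def symmEquiv (n : Type*) [Fintype n] [DecidableEq n] [LinearOrder n] :
    symmSub n ≃ₗ[ℝ] ({ p : n × n // p.1 ≤ p.2 } → ℝ) where
  toFun A p := A.1 p.1.1 p.1.2
  map_add' _ _ := rfl
  map_smul' _ _ := rfl
  invFun f := ⟨Matrix.of fun i j =>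
      if h : i ≤ j then f ⟨(i, j), h⟩ else f ⟨(j, i), le_of_not_ge h⟩, by
    apply Matrix.IsSymm.ext
    intro i j
    simp only [Matrix.of_apply]
    rcases le_total i j with h | h
    · rcases eq_or_lt_of_le h with rfl | hlt
      · rfl
      · rw [dif_neg (not_le.mpr hlt), dif_pos h]
    · rcases eq_or_lt_of_le h with rfl | hlt
      · rfl
      · rw [dif_pos h, dif_neg (not_le.mpr hlt)]⟩
  left_inv A := by
    apply Subtype.ext
    ext i j
    simp only [Matrix.of_apply]
    split_ifs with h
    · rfl
    · exact A.2.apply i j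
  right_inv f := by
    ext ⟨⟨i, j⟩, h⟩
    simp only [Matrix.of_apply, dif_pos h]

lemma finrank_symmSub (n : Type*) [Fintype n] [DecidableEq n] [LinearOrder n] :
    Module.finrank ℝ (symmSub n) = Fintype.card n * (Fintype.card n + 1) / 2 := by
  rw [(symmEquiv n).finrank_eq, Module.finrank_fintype_fun_eq_card]
  have h1 : Fintype.card { p : n × n // p.1 ≤ p.2 } = Fintype.card (Sym2 n) :=
    (Fintype.card_congr Sym2.sortEquiv).symm
  rw [h1, Sym2.card, Nat.choose_two_right, Nat.add_sub_cancel, Nat.mul_comm]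

end PatakiAux

open PatakiAux in
set_option maxHeartbeats 1200000 in
/-- **Pataki.** If `L` is an `m`-dimensional affine subspace of the space of real
symmetric `N×N` matrices and `S = L ∩ {psd matrices}`, then every extreme point `θ`
of `S` satisfies `m + r(r+1)/2 ≤ N(N+1)/2` where `r = rank θ`. -/
theorem pataki_extreme_point_rank_bound
    (N : ℕ) (hN : 1 ≤ N) (m : ℕ)
    (L : AffineSubspace ℝ (Matrix (Fin N) (Fin N) ℝ))
    (hLsymm : ∀ A ∈ L, A.IsSymm)
    (hLdim : Module.finrank ℝ L.direction = m)
    (S : Set (Matrix (Fin N) (Fin N) ℝ))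
    (hS : S = {A | A ∈ L ∧ A.PosSemidef})
    (θ : Matrix (Fin N) (Fin N) ℝ)
    (hθ : θ ∈ Set.extremePoints ℝ S) :
    m + θ.rank * (θ.rank + 1) / 2 ≤ N * (N + 1) / 2 := by
  classical
  subst hS
  obtain ⟨⟨hθL, hθpsd⟩, hext⟩ := hθ
  have hH : θ.IsHermitian := hθpsd.1
  set lam : Fin N → ℝ := hH.eigenvalues with hlam
  set U : Matrix (Fin N) (Fin N) ℝ := (hH.eigenvectorUnitary : Matrix (Fin N) (Fin N) ℝ) with hUdef
  have hUU : U * star U = 1 := Matrix.mem_unitaryGroup_iff.mp hH.eigenvectorUnitary.2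
  have hUU' : star U * U = 1 := Matrix.mem_unitaryGroup_iff'.mp hH.eigenvectorUnitary.2
  have hspec : θ = U * Matrix.diagonal lam * star U := by
    have h := hH.spectral_theorem
    rw [Unitary.conjStarAlgAut_apply] at h
    rwa [show RCLike.ofReal ∘ hH.eigenvalues = lam by
      funext i; simp [RCLike.ofReal_real_eq_id, hlam]] at h
  have hcancel : ∀ X : Matrix (Fin N) (Fin N) ℝ, star U * (U * X * star U) * U = X := by
    intro X
    calc star U * (U * X * star U) * U = (star U * U) * X * (star U * U) := by
          simp only [Matrix.mul_assoc]
      _ = X := by rw [hUU', Matrix.one_mul, Matrix.mul_one]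
  -- index subtype of nonzero eigenvalues
  have hrank : θ.rank = Fintype.card {i // lam i ≠ 0} := hH.rank_eq_card_non_zero_eigs
  -- the embedding linear map
  let Φ : Matrix {i // lam i ≠ 0} {i // lam i ≠ 0} ℝ →ₗ[ℝ] Matrix (Fin N) (Fin N) ℝ :=
    { toFun := fun B => Matrix.of fun i j =>
        if h : lam i ≠ 0 ∧ lam j ≠ 0 then B ⟨i, h.1⟩ ⟨j, h.2⟩ else 0
      map_add' := by
        intro B C; ext i j
        by_cases h : lam i ≠ 0 ∧ lam j ≠ 0 <;> simp [h]
      map_smul' := by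
        intro c B; ext i j
        by_cases h : lam i ≠ 0 ∧ lam j ≠ 0 <;> simp [h] }
  have hΦapp : ∀ B i j, Φ B i j =
      if h : lam i ≠ 0 ∧ lam j ≠ 0 then B ⟨i, h.1⟩ ⟨j, h.2⟩ else 0 := fun _ _ _ => rfl
  have hΦinj : Function.Injective Φ := by
    intro B C h
    ext ⟨i, hi⟩ ⟨j, hj⟩
    have h2 : Φ B i j = Φ C i j := by rw [h]
    rw [hΦapp, hΦapp, dif_pos ⟨hi, hj⟩, dif_pos ⟨hi, hj⟩] at h2
    exact h2
  have hΦsymm : ∀ B, B.IsSymm → (Φ B).IsSymm := by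
    intro B hB
    apply Matrix.IsSymm.ext
    intro i j
    rw [hΦapp, hΦapp]
    by_cases h : lam i ≠ 0 ∧ lam j ≠ 0
    · rw [dif_pos ⟨h.2, h.1⟩, dif_pos h]
      exact hB.apply ⟨i, h.1⟩ ⟨j, h.2⟩
    · rw [dif_neg h, dif_neg (fun h' => h ⟨h'.2, h'.1⟩)]
  -- full map B ↦ U * Φ B * star U
  let Θmap : Matrix {i // lam i ≠ 0} {i // lam i ≠ 0} ℝ →ₗ[ℝ] Matrix (Fin N) (Fin N) ℝ :=
    { toFun := fun B => U * Φ B * star U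
      map_add' := by
        intro B C
        show U * Φ (B + C) * star U = U * Φ B * star U + U * Φ C * star U
        rw [map_add, Matrix.mul_add, Matrix.add_mul]
      map_smul' := by
        intro c B
        show U * Φ (c • B) * star U = c • (U * Φ B * star U)
        rw [_root_.map_smul, mul_smul_comm, smul_mul_assoc]
      }
  have hΘinj : Function.Injective Θmap := by
    intro B C h
    apply hΦinj
    rw [← hcancel (Φ B), ← hcancel (Φ C)]
    show star U * (Θmap B) * U = star U * (Θmap C) * U
    rw [h]
  let W : Submodule ℝ (Matrix (Fin N) (Fin N) ℝ) :=
    (symmSub {i // lam i ≠ 0}).map Θmap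
  have hWrank : Module.finrank ℝ W = θ.rank * (θ.rank + 1) / 2 := by
    rw [← (Submodule.equivMapOfInjective _ hΘinj (symmSub {i // lam i ≠ 0})).finrank_eq,
      finrank_symmSub, hrank]
  -- finset of indices with nonzero eigenvalue
  set Zf : Finset (Fin N) := Finset.univ.filter (fun i => lam i ≠ 0) with hZf
  have hmemZf : ∀ i, i ∈ Zf ↔ lam i ≠ 0 := by intro i; simp [hZf]
  have hcardZf : (Zf.card : ℝ) = (Fintype.card {i // lam i ≠ 0} : ℝ) := by
    norm_cast
    rw [Fintype.card_subtype]
  -- the key perturbation lemma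
  have key : ∀ B ∈ W, ∃ ε : ℝ, 0 < ε ∧ (θ + ε • B).PosSemidef ∧ (θ - ε • B).PosSemidef := by
    intro B hBW
    obtain ⟨B₀, hB₀sym, rfl⟩ := Submodule.mem_map.mp hBW
    rw [mem_symmSub] at hB₀sym
    set C : Matrix (Fin N) (Fin N) ℝ := Φ B₀ with hCdef
    have hCsupp : ∀ i j, ¬(lam i ≠ 0 ∧ lam j ≠ 0) → C i j = 0 := by
      intro i j h; rw [hCdef, hΦapp, dif_neg h]
    have hCsym : C.IsSymm := hΦsymm B₀ hB₀sym
    set M : ℝ := ∑ p : {i // lam i ≠ 0}, ∑ q : {i // lam i ≠ 0}, |B₀ p q| with hMdef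
    have hM0 : 0 ≤ M :=
      Finset.sum_nonneg fun p _ => Finset.sum_nonneg fun q _ => abs_nonneg _
    have hCbound : ∀ i j, |C i j| ≤ M := by
      intro i j
      by_cases h : lam i ≠ 0 ∧ lam j ≠ 0
      · rw [hCdef, hΦapp, dif_pos h]
        calc |B₀ ⟨i, h.1⟩ ⟨j, h.2⟩| ≤ ∑ q : {i // lam i ≠ 0}, |B₀ ⟨i, h.1⟩ q| :=
              Finset.single_le_sum (f := fun q => |B₀ ⟨i, h.1⟩ q|)
                (fun q _ => abs_nonneg _) (Finset.mem_univ _)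
          _ ≤ M := Finset.single_le_sum (f := fun p => ∑ q : {i // lam i ≠ 0}, |B₀ p q|)
              (fun p _ => Finset.sum_nonneg fun q _ => abs_nonneg _) (Finset.mem_univ _)
      · rw [hCsupp i j h, abs_zero]; exact hM0
    -- quadratic forms
    have hquadD : ∀ x : Fin N → ℝ, x ⬝ᵥ (Matrix.diagonal lam *ᵥ x) = ∑ i, lam i * x i ^ 2 := by
      intro x
      simp only [dotProduct, mulVec_diagonal]
      exact Finset.sum_congr rfl fun i _ => by ring
    have hquadC : ∀ x : Fin N → ℝ,
        x ⬝ᵥ (C *ᵥ x) = ∑ i ∈ Zf, ∑ j ∈ Zf, x i * C i j * x j := by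
      intro x
      have h1 : x ⬝ᵥ (C *ᵥ x) = ∑ i : Fin N, ∑ j : Fin N, x i * C i j * x j := by
        simp only [dotProduct, mulVec, Finset.mul_sum]
        exact Finset.sum_congr rfl fun i _ => Finset.sum_congr rfl fun j _ => by ring
      rw [h1]
      rw [← Finset.sum_subset (Finset.subset_univ Zf) (fun i _ hi => ?_)]
      · refine Finset.sum_congr rfl fun i hi => ?_
        refine (Finset.sum_subset (Finset.subset_univ Zf) fun j _ hj => ?_).symm
        rw [hCsupp i j (fun h => hj ((hmemZf j).mpr h.2)), mul_zero, zero_mul]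
      · refine Finset.sum_eq_zero fun j _ => ?_
        rw [hCsupp i j (fun h => hi ((hmemZf i).mpr h.1)), mul_zero, zero_mul]
    by_cases hZne : Zf.Nonempty
    · -- minimum positive eigenvalue
      set lmin : ℝ := Zf.inf' hZne lam with hlmin
      have hlmin_pos : 0 < lmin := by
        rw [hlmin, Finset.lt_inf'_iff]
        intro i hi
        exact lt_of_le_of_ne (hθpsd.eigenvalues_nonneg i) (Ne.symm ((hmemZf i).mp hi))
      set rc : ℝ := (Zf.card : ℝ) with hrc
      have hrc0 : 0 ≤ rc := Nat.cast_nonneg _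
      set ε : ℝ := lmin / (M * rc + 1) with hε
      have hden : 0 < M * rc + 1 := by nlinarith [mul_nonneg hM0 hrc0]
      have hεpos : 0 < ε := div_pos hlmin_pos hden
      have hεMrc : ε * (M * rc) ≤ lmin := by
        have h1 : ε * (M * rc + 1) = lmin := by
          rw [hε]; field_simp
        nlinarith
      -- main positivity estimate
      have main : ∀ s : ℝ, |s| ≤ ε →
          (Matrix.diagonal lam + s • C).PosSemidef := by
        intro s hs
        rw [posSemidef_iff_dotProduct_mulVec]
        constructor
        · exact isHermitian_of_isSymm ((isSymm_diagonal lam).add (hCsym.smul s))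
        · intro x
          rw [star_trivial, add_mulVec, dotProduct_add, smul_mulVec, dotProduct_smul,
            smul_eq_mul, hquadD, hquadC]
          set t : ℝ := ∑ i ∈ Zf, x i ^ 2 with ht
          have ht0 : 0 ≤ t := Finset.sum_nonneg fun i _ => sq_nonneg _
          have hD1 : lmin * t ≤ ∑ i, lam i * x i ^ 2 := by
            calc lmin * t = ∑ i ∈ Zf, lmin * x i ^ 2 := by rw [ht, Finset.mul_sum]
              _ ≤ ∑ i ∈ Zf, lam i * x i ^ 2 :=
                  Finset.sum_le_sum fun i hi =>
                    mul_le_mul_of_nonneg_right (Finset.inf'_le lam hi) (sq_nonneg _)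
              _ ≤ ∑ i : Fin N, lam i * x i ^ 2 :=
                  Finset.sum_le_sum_of_subset_of_nonneg (Finset.subset_univ _)
                    (fun i _ _ => mul_nonneg (hθpsd.eigenvalues_nonneg i) (sq_nonneg _))
          have hsum2 : ∑ i ∈ Zf, ∑ j ∈ Zf, (x i ^ 2 + x j ^ 2) = 2 * rc * t := by
            have hinner : ∀ i, ∑ j ∈ Zf, (x i ^ 2 + x j ^ 2) = rc * x i ^ 2 + t := by
              intro i
              rw [Finset.sum_add_distrib, Finset.sum_const, nsmul_eq_mul, ← ht, hrc]
            rw [Finset.sum_congr rfl fun i _ => hinner i, Finset.sum_add_distrib,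
              ← Finset.mul_sum, ← ht, Finset.sum_const, nsmul_eq_mul, ← hrc]
            ring
          have hC1 : |∑ i ∈ Zf, ∑ j ∈ Zf, x i * C i j * x j| ≤ M * rc * t := by
            calc |∑ i ∈ Zf, ∑ j ∈ Zf, x i * C i j * x j|
                ≤ ∑ i ∈ Zf, |∑ j ∈ Zf, x i * C i j * x j| := Finset.abs_sum_le_sum_abs _ _
              _ ≤ ∑ i ∈ Zf, ∑ j ∈ Zf, |x i * C i j * x j| :=
                  Finset.sum_le_sum fun i _ => Finset.abs_sum_le_sum_abs _ _
              _ ≤ ∑ i ∈ Zf, ∑ j ∈ Zf, M * (x i ^ 2 + x j ^ 2) / 2 := by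
                  refine Finset.sum_le_sum fun i _ => Finset.sum_le_sum fun j _ => ?_
                  have h1 := hCbound i j
                  have h2 : |x i * C i j * x j| = |x i| * |C i j| * |x j| := by
                    rw [abs_mul, abs_mul]
                  nlinarith [abs_nonneg (x i), abs_nonneg (x j), abs_nonneg (C i j),
                    sq_abs (x i), sq_abs (x j), sq_nonneg (|x i| - |x j|)]
              _ = M * (∑ i ∈ Zf, ∑ j ∈ Zf, (x i ^ 2 + x j ^ 2)) / 2 := by
                  rw [Finset.mul_sum, Finset.sum_div]
                  refine Finset.sum_congr rfl fun i _ => ?_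
                  rw [Finset.mul_sum, Finset.sum_div]
              _ = M * rc * t := by rw [hsum2]; ring
          have habs : |s * (∑ i ∈ Zf, ∑ j ∈ Zf, x i * C i j * x j)| ≤ ε * (M * rc * t) := by
            rw [abs_mul]
            exact mul_le_mul hs hC1 (abs_nonneg _) (le_of_lt hεpos)
          have hεt : ε * (M * rc * t) ≤ lmin * t := by
            have := mul_le_mul_of_nonneg_right hεMrc ht0
            nlinarith
          have hlow := neg_abs_le (s * (∑ i ∈ Zf, ∑ j ∈ Zf, x i * C i j * x j))
          linarith
      refine ⟨ε, hεpos, ?_, ?_⟩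
      · have heq : θ + ε • Θmap B₀ = U * (Matrix.diagonal lam + ε • C) * star U := by
          show θ + ε • (U * C * star U) = _
          rw [hspec, Matrix.mul_add, Matrix.add_mul, mul_smul_comm, smul_mul_assoc]
        rw [heq, Matrix.star_eq_conjTranspose U]
        exact ((main ε (by rw [abs_of_pos hεpos])).mul_mul_conjTranspose_same U)
      · have heq : θ - ε • Θmap B₀ = U * (Matrix.diagonal lam + (-ε) • C) * star U := by
          show θ - ε • (U * C * star U) = _
          rw [hspec, Matrix.mul_add, Matrix.add_mul, mul_smul_comm, smul_mul_assoc,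
            neg_smul, sub_eq_add_neg]
        rw [heq, Matrix.star_eq_conjTranspose U]
        exact ((main (-ε) (by rw [abs_neg, abs_of_pos hεpos])).mul_mul_conjTranspose_same U)
    · -- no nonzero eigenvalues: Φ B₀ = 0
      have hC0 : C = 0 := by
        ext i j
        rw [hCsupp i j (fun h => hZne ⟨i, (hmemZf i).mpr h.1⟩)]
        rfl
      have hB0 : Θmap B₀ = 0 := by
        show U * C * star U = 0
        rw [hC0, Matrix.mul_zero, Matrix.zero_mul]
      refine ⟨1, one_pos, ?_, ?_⟩ <;> rw [hB0] <;> simp [hθpsd]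
  -- extreme point gives disjointness
  have hdisj : Disjoint L.direction W := by
    rw [Submodule.disjoint_def]
    intro B hBL hBW
    obtain ⟨ε, hεpos, hp, hm⟩ := key B hBW
    have hxS : (θ - ε • B) ∈ {A | A ∈ L ∧ A.PosSemidef} := by
      refine ⟨?_, hm⟩
      have h1 : θ - ε • B = (-ε) • B +ᵥ θ := by
        show θ - ε • B = (-ε) • B + θ
        rw [neg_smul]; abel
      rw [h1]
      exact AffineSubspace.vadd_mem_of_mem_direction (L.direction.smul_mem _ hBL) hθL
    have hyS : (θ + ε • B) ∈ {A | A ∈ L ∧ A.PosSemidef} := by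
      refine ⟨?_, hp⟩
      have h1 : θ + ε • B = ε • B +ᵥ θ := by
        show θ + ε • B = ε • B + θ
        abel
      rw [h1]
      exact AffineSubspace.vadd_mem_of_mem_direction (L.direction.smul_mem _ hBL) hθL
    have hseg : θ ∈ openSegment ℝ (θ - ε • B) (θ + ε • B) :=
      ⟨1/2, 1/2, by norm_num, by norm_num, by norm_num, by module⟩
    have h := hext hxS hyS hseg
    have h0 : ε • B = 0 := by
      have := sub_eq_self.mp h
      exact this
    rcases smul_eq_zero.mp h0 with h' | h'
    · exact absurd h' (ne_of_gt hεpos)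
    · exact h'
  -- direction and W are inside the symmetric matrices
  have hLdir : L.direction ≤ symmSub (Fin N) := by
    intro v hv
    rw [AffineSubspace.mem_direction_iff_eq_vsub ⟨θ, hθL⟩] at hv
    obtain ⟨p, hp, q, hq, rfl⟩ := hv
    show (p -ᵥ q).IsSymm
    exact (hLsymm p hp).sub (hLsymm q hq)
  have hWsym : W ≤ symmSub (Fin N) := by
    rintro _ ⟨B₀, hB₀, rfl⟩
    have hsym : (Φ B₀)ᵀ = Φ B₀ := hΦsymm B₀ hB₀
    show (U * Φ B₀ * star U)ᵀ = U * Φ B₀ * star U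
    rw [Matrix.star_eq_conjTranspose, conjTranspose_eq_transpose_of_trivial,
      Matrix.transpose_mul, Matrix.transpose_mul, Matrix.transpose_transpose, hsym,
      ← Matrix.mul_assoc]
  -- dimension count
  have hd : Module.finrank ℝ L.direction + Module.finrank ℝ W
      ≤ Module.finrank ℝ (symmSub (Fin N)) := by
    rw [← Submodule.finrank_sup_add_finrank_inf_eq, hdisj.eq_bot, finrank_bot, add_zero]
    exact Submodule.finrank_mono (sup_le hLdir hWsym)
  rw [hLdim, hWrank, finrank_symmSub, Fintype.card_fin] at hd
  exact hd
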